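/- Let ℰ ∈ ℝ^{p×p×N} be a third-order tensor, V ∈ O_{p,r}, and D ∈ ℝ^{r×r} a diagonal matrix. Then the weighted trace-product vector [ℰ; V, D] ∈ ℝ^N, whose k-th entry is Tr(D·Vᵀℰ_{:,:,k}V) = Σ_{i=1}^r D_{ii}·v_iᵀℰ_{:,:,k}v_i (v_i the i-th column of V), satisfies ‖[ℰ; V, D]‖₂ ≤ √r·‖D‖_F·‖ℰ‖_op. -/

import Mathlib

open scoped BigOperators
open Matrix MeasureTheory

noncomputable section

/-- Euclidean (ℓ₂) norm of a finitely-indexed real vector. -/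
def enorm2 {ι : Type*} [Fintype ι] (v : ι → ℝ) : ℝ := Real.sqrt (∑ i, v i ^ 2)

/-- Normalize a vector to unit ℓ₂ norm (junk value `0` if `v = 0`). -/
def unitize {ι : Type*} [Fintype ι] (v : ι → ℝ) : ι → ℝ := (enorm2 v)⁻¹ • v

/-- `sin θ` distance between two unit vectors: `√(1 − ⟨a,b⟩²)`. -/
def sinTheta {ι : Type*} [Fintype ι] (a b : ι → ℝ) : ℝ :=
  Real.sqrt (1 - (∑ i, a i * b i) ^ 2)

/-- A matrix has orthonormal columns: `Vᵀ V = I`. -/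
def Orth {p r : ℕ} (V : Matrix (Fin p) (Fin r) ℝ) : Prop := Vᵀ * V = 1

/-- Smallest singular value of a square matrix: `inf_{‖v‖=1} ‖Mv‖`. -/
def smallestSV {r : ℕ} (M : Matrix (Fin r) (Fin r) ℝ) : ℝ :=
  sInf {x | ∃ v : Fin r → ℝ, enorm2 v = 1 ∧ x = enorm2 (M.mulVec v)}

/-- `‖sinΘ(V₁, V₂)‖_op = √(1 − σ_r(V₁ᵀV₂)²)` for frames with orthonormal columns. -/
def sinThetaOp {p r : ℕ} (V₁ V₂ : Matrix (Fin p) (Fin r) ℝ) : ℝ :=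
  Real.sqrt (1 - smallestSV (V₁ᵀ * V₂) ^ 2)

/-- Matrix spectral (operator) norm. -/
def mOpNorm {ι κ : Type*} [Fintype ι] [Fintype κ] (M : Matrix ι κ ℝ) : ℝ :=
  sSup {x | ∃ v : κ → ℝ, enorm2 v = 1 ∧ x = enorm2 (M.mulVec v)}

/-- Matrix Frobenius norm. -/
def frobNorm {ι κ : Type*} [Fintype ι] [Fintype κ] (M : Matrix ι κ ℝ) : ℝ :=
  Real.sqrt (∑ i, ∑ j, M i j ^ 2)

/-- Operator norm of a third-order tensor. -/
def tOpNorm {p q N : ℕ} (T : Fin p → Fin q → Fin N → ℝ) : ℝ :=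
  sSup {x | ∃ (v : Fin p → ℝ) (w : Fin q → ℝ) (z : Fin N → ℝ),
    enorm2 v = 1 ∧ enorm2 w = 1 ∧ enorm2 z = 1 ∧
    x = ∑ i, ∑ j, ∑ k, T i j k * v i * w j * z k}

/-- A tensor in `ℝ^{p×p×N}` is semi-symmetric if every tslice is a symmetric matrix. -/
def SemiSym {p N : ℕ} (T : Fin p → Fin p → Fin N → ℝ) : Prop := ∀ i j k, T i j k = T j i k

/-- The k-th tslice `T_{:,:,k}` of a tensor. -/
def tslice {p q N : ℕ} (T : Fin p → Fin q → Fin N → ℝ) (k : Fin N) : Matrix (Fin p) (Fin q) ℝ :=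
  Matrix.of fun i j => T i j k

/-- Mode-3 contraction `T ×₃ u`. -/
def mode3 {p q N : ℕ} (T : Fin p → Fin q → Fin N → ℝ) (u : Fin N → ℝ) :
    Matrix (Fin p) (Fin q) ℝ :=
  Matrix.of fun i j => ∑ k, T i j k * u k

/-- Trace product `[T; V] ∈ ℝ^N`, with k-th entry `Tr(Vᵀ T_{:,:,k} V)`. -/
def traceProd {p N r : ℕ} (T : Fin p → Fin p → Fin N → ℝ) (V : Matrix (Fin p) (Fin r) ℝ) :
    Fin N → ℝ :=
  fun k => Matrix.trace (Vᵀ * tslice T k * V)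

/-- Weighted trace product `[T; V, D] ∈ ℝ^N`, with k-th entry `Tr(D Vᵀ T_{:,:,k} V)`. -/
def traceProdD {p N r : ℕ} (T : Fin p → Fin p → Fin N → ℝ) (V : Matrix (Fin p) (Fin r) ℝ)
    (D : Matrix (Fin r) (Fin r) ℝ) : Fin N → ℝ :=
  fun k => Matrix.trace (D * (Vᵀ * tslice T k * V))

/-- `V` is a matrix of left singular vectors of `A` associated with its `r` largest singular
values: `V` has orthonormal columns, each column is an eigenvector of `AAᵀ`, and the
corresponding eigenvalues dominate the Rayleigh quotient of `AAᵀ` on the orthogonal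
complement of the column span. -/
def IsLeadingLeft {ι κ : Type*} [Fintype ι] [Fintype κ] {r : ℕ}
    (A : Matrix ι κ ℝ) (V : Matrix ι (Fin r) ℝ) : Prop :=
  Vᵀ * V = 1 ∧ ∃ μ : Fin r → ℝ,
    (∀ i, (A * Aᵀ).mulVec (fun j => V j i) = μ i • fun j => V j i) ∧
    ∀ i, ∀ x : ι → ℝ, (∀ l, (∑ j, x j * V j l) = 0) →
      ∑ j, x j * (A * Aᵀ).mulVec x j ≤ μ i * ∑ j, x j ^ 2

/-- `v` is a leading (unit) left singular vector of `A`. -/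
def IsLeadingLeftVec {ι κ : Type*} [Fintype ι] [Fintype κ]
    (A : Matrix ι κ ℝ) (v : ι → ℝ) : Prop :=
  enorm2 v = 1 ∧ ∃ μ : ℝ,
    (A * Aᵀ).mulVec v = μ • v ∧
    ∀ x : ι → ℝ, (∑ j, x j * v j) = 0 →
      ∑ j, x j * (A * Aᵀ).mulVec x j ≤ μ * ∑ j, x j ^ 2

/-- The single-factor JisstPCA iteration (Algorithm 1): given `u⁽ᵗ⁾`, take `V⁽ᵗ⁺¹⁾`/`W⁽ᵗ⁺¹⁾`
to be leading singular vectors of the mode-3 contractions, then update `u⁽ᵗ⁺¹⁾` as the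
normalized weighted combination of trace products. -/
def JisstIter {p q N rx ry : ℕ} (X : Fin p → Fin p → Fin N → ℝ) (Y : Fin q → Fin q → Fin N → ℝ)
    (lam : ℝ) (u : ℕ → Fin N → ℝ) (V : ℕ → Matrix (Fin p) (Fin rx) ℝ)
    (W : ℕ → Matrix (Fin q) (Fin ry) ℝ) : Prop :=
  ∀ t : ℕ,
    IsLeadingLeft (mode3 X (u t)) (V (t + 1)) ∧
    IsLeadingLeft (mode3 Y (u t)) (W (t + 1)) ∧
    u (t + 1) =
      unitize (fun k => lam * traceProd X (V (t + 1)) k + (1 - lam) * traceProd Y (W (t + 1)) k)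

/-- The generalized single-factor JisstPCA iteration (Algorithm 6), with diagonal-core
updates `D⁽ᵗ⁺¹⁾ = Vᵀ(𝒳×₃u)V` used to weight the trace products. -/
def GJisstIter {p q N rx ry : ℕ} (X : Fin p → Fin p → Fin N → ℝ) (Y : Fin q → Fin q → Fin N → ℝ)
    (lam : ℝ) (u : ℕ → Fin N → ℝ) (V : ℕ → Matrix (Fin p) (Fin rx) ℝ)
    (W : ℕ → Matrix (Fin q) (Fin ry) ℝ) : Prop :=
  ∀ t : ℕ,
    IsLeadingLeft (mode3 X (u t)) (V (t + 1)) ∧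
    IsLeadingLeft (mode3 Y (u t)) (W (t + 1)) ∧
    u (t + 1) =
      unitize (fun k =>
        lam * traceProdD X (V (t + 1)) ((V (t + 1))ᵀ * mode3 X (u t) * V (t + 1)) k +
        (1 - lam) * traceProdD Y (W (t + 1)) ((W (t + 1))ᵀ * mode3 Y (u t) * W (t + 1)) k)

/-- Integrated noise norm `‖λℰ_x; (1−λ)ℰ_y‖_{r_x,r_y,op}`. -/
def intNoiseNorm {p q N : ℕ} (lam : ℝ) (rx ry : ℕ) (Ex : Fin p → Fin p → Fin N → ℝ)
    (Ey : Fin q → Fin q → Fin N → ℝ) : ℝ :=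
  sSup {x | ∃ (V : Matrix (Fin p) (Fin rx) ℝ) (W : Matrix (Fin q) (Fin ry) ℝ),
    Orth V ∧ Orth W ∧
    x = enorm2 (fun k => lam * traceProd Ex V k + (1 - lam) * traceProd Ey W k)}

/-- The column-concatenated matricization `[λ𝓜₃(𝒳), (1−λ)𝓜₃(𝒴)] ∈ ℝ^{N×(p²+q²)}`. -/
def concatMat3 {p q N : ℕ} (lam : ℝ) (X : Fin p → Fin p → Fin N → ℝ)
    (Y : Fin q → Fin q → Fin N → ℝ) :
    Matrix (Fin N) ((Fin p × Fin p) ⊕ (Fin q × Fin q)) ℝ :=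
  Matrix.of fun k => Sum.elim (fun ij => lam * X ij.1 ij.2 k) (fun ij => (1 - lam) * Y ij.1 ij.2 k)

/-- A real random variable is zero-mean and sub-Gaussian with parameter `σ`. -/
def SubGZero {Ω : Type*} [MeasurableSpace Ω] (μ : Measure Ω) (σ : ℝ) (f : Ω → ℝ) : Prop :=
  (∫ ω, f ω ∂μ) = 0 ∧ ∀ t : ℝ, (∫ ω, Real.exp (t * f ω) ∂μ) ≤ Real.exp (t ^ 2 * σ ^ 2 / 2)

/-- The family of on-and-above-diagonal entries of the two random noise tensors. -/
def upperFam {Ω : Type*} {p q N : ℕ} (Ex : Ω → Fin p → Fin p → Fin N → ℝ)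
    (Ey : Ω → Fin q → Fin q → Fin N → ℝ) :
    (({ij : Fin p × Fin p // ij.1 ≤ ij.2} × Fin N) ⊕
      ({ij : Fin q × Fin q // ij.1 ≤ ij.2} × Fin N)) → Ω → ℝ
  | Sum.inl x => fun ω => Ex ω x.1.1.1 x.1.1.2 x.2
  | Sum.inr x => fun ω => Ey ω x.1.1.1 x.1.1.2 x.2

/-- Sub-Gaussian noise assumption (Assumption 3.3): both noise tensors are semi-symmetric,
their on-and-above-diagonal entries are jointly independent, zero-mean, sub-Gaussian-σ, and
the tslice-wise sums of entrywise variances do not depend on the tslice. -/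
def SubGaussianNoise {Ω : Type*} [MeasurableSpace Ω] (μ : Measure Ω) {p q N : ℕ} (σ : ℝ)
    (Ex : Ω → Fin p → Fin p → Fin N → ℝ) (Ey : Ω → Fin q → Fin q → Fin N → ℝ) : Prop :=
  (∀ ω, SemiSym (Ex ω)) ∧ (∀ ω, SemiSym (Ey ω)) ∧
  (∀ i j k, Measurable fun ω => Ex ω i j k) ∧
  (∀ i j k, Measurable fun ω => Ey ω i j k) ∧
  (∀ i j k, SubGZero μ σ fun ω => Ex ω i j k) ∧
  (∀ i j k, SubGZero μ σ fun ω => Ey ω i j k) ∧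
  ProbabilityTheory.iIndepFun (upperFam Ex Ey) μ ∧
  (∀ k k' : Fin N, (∑ i, ∑ j, ∫ ω, (Ex ω i j k) ^ 2 ∂μ) = ∑ i, ∑ j, ∫ ω, (Ex ω i j k') ^ 2 ∂μ) ∧
  (∀ k k' : Fin N, (∑ i, ∑ j, ∫ ω, (Ey ω i j k) ^ 2 ∂μ) = ∑ i, ∑ j, ∫ ω, (Ey ω i j k') ^ 2 ∂μ)


lemma enorm2_nonneg' {ι : Type*} [Fintype ι] (v : ι → ℝ) : 0 ≤ enorm2 v :=
  Real.sqrt_nonneg _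

lemma enorm2_sq {ι : Type*} [Fintype ι] (v : ι → ℝ) : enorm2 v ^ 2 = ∑ i, v i ^ 2 :=
  Real.sq_sqrt (Finset.sum_nonneg fun i _ => sq_nonneg _)

lemma enorm2_smul {ι : Type*} [Fintype ι] (c : ℝ) (v : ι → ℝ) :
    enorm2 (c • v) = |c| * enorm2 v := by
  unfold enorm2
  rw [← Real.sqrt_sq_eq_abs, ← Real.sqrt_mul (sq_nonneg c), Finset.mul_sum]
  congr 1
  apply Finset.sum_congr rfl
  intro i _
  simp [mul_pow]

lemma enorm2_neg {ι : Type*} [Fintype ι] (v : ι → ℝ) : enorm2 (-v) = enorm2 v := by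
  unfold enorm2; simp

lemma abs_le_one_of_enorm2 {ι : Type*} [Fintype ι] {v : ι → ℝ} (hv : enorm2 v = 1)
    (i : ι) : |v i| ≤ 1 := by
  have h : ∑ j, v j ^ 2 = 1 := by
    have := enorm2_sq v; rw [hv] at this; linarith
  have h1 : v i ^ 2 ≤ 1 := by
    rw [← h]
    exact Finset.single_le_sum (fun j _ => sq_nonneg (v j)) (Finset.mem_univ i)
  nlinarith [abs_nonneg (v i), sq_abs (v i)]

lemma enorm2_eq_norm {ι : Type*} [Fintype ι] (v : ι → ℝ) :
    enorm2 v = ‖(WithLp.equiv 2 (ι → ℝ)).symm v‖ := by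
  rw [EuclideanSpace.norm_eq]
  unfold enorm2
  congr 1
  exact Finset.sum_congr rfl fun i _ => by simp [Real.norm_eq_abs, sq_abs]

lemma tOpNorm_bdd {p q N : ℕ} (T : Fin p → Fin q → Fin N → ℝ) :
    BddAbove {x | ∃ (v : Fin p → ℝ) (w : Fin q → ℝ) (z : Fin N → ℝ),
      enorm2 v = 1 ∧ enorm2 w = 1 ∧ enorm2 z = 1 ∧
      x = ∑ i, ∑ j, ∑ k, T i j k * v i * w j * z k} := by
  refine ⟨∑ i, ∑ j, ∑ k, |T i j k|, ?_⟩
  rintro x ⟨v, w, z, hv, hw, hz, rfl⟩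
  calc ∑ i, ∑ j, ∑ k, T i j k * v i * w j * z k
      ≤ ∑ i, ∑ j, ∑ k, |T i j k * v i * w j * z k| := by
        refine Finset.sum_le_sum fun i _ => Finset.sum_le_sum fun j _ =>
          Finset.sum_le_sum fun k _ => le_abs_self _
    _ ≤ ∑ i, ∑ j, ∑ k, |T i j k| := by
        refine Finset.sum_le_sum fun i _ => Finset.sum_le_sum fun j _ =>
          Finset.sum_le_sum fun k _ => ?_
        rw [abs_mul, abs_mul, abs_mul]
        calc |T i j k| * |v i| * |w j| * |z k|
            ≤ |T i j k| * 1 * 1 * 1 := by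
              gcongr
              · exact abs_le_one_of_enorm2 hv i
              · exact abs_le_one_of_enorm2 hw j
              · exact abs_le_one_of_enorm2 hz k
          _ = |T i j k| := by ring

lemma tOpNorm_nonneg {p q N : ℕ} (T : Fin p → Fin q → Fin N → ℝ) : 0 ≤ tOpNorm T := by
  unfold tOpNorm
  set S := {x | ∃ (v : Fin p → ℝ) (w : Fin q → ℝ) (z : Fin N → ℝ),
      enorm2 v = 1 ∧ enorm2 w = 1 ∧ enorm2 z = 1 ∧
      x = ∑ i, ∑ j, ∑ k, T i j k * v i * w j * z k} with hS
  rcases Set.eq_empty_or_nonempty S with h | ⟨x, hx⟩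
  · rw [h, Real.sSup_empty]
  · obtain ⟨v, w, z, hv, hw, hz, rfl⟩ := hx
    have hx' : (∑ i, ∑ j, ∑ k, T i j k * v i * w j * z k) ≤ sSup S :=
      le_csSup (tOpNorm_bdd T) ⟨v, w, z, hv, hw, hz, rfl⟩
    have hneg : (-∑ i, ∑ j, ∑ k, T i j k * v i * w j * z k) ≤ sSup S := by
      refine le_csSup (tOpNorm_bdd T) ⟨v, w, -z, hv, hw, by rw [enorm2_neg]; exact hz, ?_⟩
      simp [mul_neg]
    linarith

/-- The ℓ₂ norm of the slice-quadratic-form vector is bounded by the tensor op norm. -/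
lemma slice_norm_le {p q N : ℕ} (T : Fin p → Fin q → Fin N → ℝ)
    (v : Fin p → ℝ) (w : Fin q → ℝ) (hv : enorm2 v = 1) (hw : enorm2 w = 1) :
    enorm2 (fun k => ∑ i, ∑ j, T i j k * v i * w j) ≤ tOpNorm T := by
  set g : Fin N → ℝ := fun k => ∑ i, ∑ j, T i j k * v i * w j with hg
  by_cases hg0 : enorm2 g = 0
  · rw [hg0]; exact tOpNorm_nonneg T
  · have hgpos : 0 < enorm2 g := lt_of_le_of_ne (enorm2_nonneg' g) (Ne.symm hg0)
    set z : Fin N → ℝ := (enorm2 g)⁻¹ • g with hz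
    have hz1 : enorm2 z = 1 := by
      rw [hz, enorm2_smul, abs_of_nonneg (inv_nonneg.mpr hgpos.le), inv_mul_cancel₀ hg0]
    have hval : (∑ i, ∑ j, ∑ k, T i j k * v i * w j * z k) = enorm2 g := by
      have h1 : (∑ i, ∑ j, ∑ k, T i j k * v i * w j * z k) = ∑ k, g k * z k := by
        have hc : (∑ i, ∑ j, ∑ k, T i j k * v i * w j * z k)
            = ∑ k, ∑ i, ∑ j, T i j k * v i * w j * z k := by
          calc (∑ i, ∑ j, ∑ k, T i j k * v i * w j * z k)
              = ∑ i, ∑ k, ∑ j, T i j k * v i * w j * z k :=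
                Finset.sum_congr rfl fun i _ => Finset.sum_comm
            _ = ∑ k, ∑ i, ∑ j, T i j k * v i * w j * z k := Finset.sum_comm
        rw [hc]
        refine Finset.sum_congr rfl fun k _ => ?_
        rw [hg, Finset.sum_mul]
        exact Finset.sum_congr rfl fun i _ => by rw [Finset.sum_mul]
      rw [h1]
      have h2 : ∑ k, g k * z k = (enorm2 g)⁻¹ * ∑ k, g k ^ 2 := by
        rw [Finset.mul_sum]
        refine Finset.sum_congr rfl fun k _ => ?_
        simp [hz]; ring
      rw [h2, ← enorm2_sq, sq]
      field_simp
    have h := le_csSup (tOpNorm_bdd T) ⟨v, w, z, hv, hw, hz1, rfl⟩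
    rw [hval] at h
    exact h

/-- enorm2 of a weighted sum of vectors. -/
lemma enorm2_weighted_sum_le {ι : Type*} [Fintype ι] {N : ℕ} (c : ι → ℝ)
    (g : ι → Fin N → ℝ) :
    enorm2 (fun k => ∑ i, c i * g i k) ≤ ∑ i, |c i| * enorm2 (g i) := by
  classical
  set L := WithLp.linearEquiv 2 ℝ (Fin N → ℝ) with hL
  have hpi : (fun k => ∑ i, c i * g i k) = ∑ i, c i • g i := by
    ext k
    simp [Finset.sum_apply]
  have key : L.symm (fun k => ∑ i, c i * g i k) = ∑ i, c i • L.symm (g i) := by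
    rw [hpi, map_sum]
    exact Finset.sum_congr rfl fun i _ => map_smul _ _ _
  have hnorm : ∀ u : Fin N → ℝ, enorm2 u = ‖L.symm u‖ := fun u => enorm2_eq_norm u
  calc enorm2 (fun k => ∑ i, c i * g i k)
      = ‖∑ i, c i • L.symm (g i)‖ := by rw [hnorm, key]
    _ ≤ ∑ i, ‖c i • L.symm (g i)‖ := norm_sum_le _ _
    _ = ∑ i, |c i| * enorm2 (g i) := by
        refine Finset.sum_congr rfl fun i _ => ?_
        rw [norm_smul, Real.norm_eq_abs, hnorm]

/-- ℓ₂ bound for the weighted trace-product vector: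
`‖[ℰ; V, D]‖₂ ≤ √r ‖D‖_F ‖ℰ‖_op` for diagonal `D`. -/
theorem traceProdD_norm_le {p N r : ℕ} (E : Fin p → Fin p → Fin N → ℝ)
    (V : Matrix (Fin p) (Fin r) ℝ) (hV : Orth V)
    (D : Matrix (Fin r) (Fin r) ℝ) (hD : D.IsDiag) :
    enorm2 (traceProdD E V D) ≤ Real.sqrt r * frobNorm D * tOpNorm E := by
  classical
  set c : Fin r → ℝ := fun i => D i i with hc
  set g : Fin r → Fin N → ℝ := fun i k => ∑ a, ∑ b, E a b k * V a i * V b i with hgdef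
  -- expand the weighted trace product
  have hexp : traceProdD E V D = fun k => ∑ i, c i * g i k := by
    funext k
    show Matrix.trace (D * (Vᵀ * tslice E k * V)) = _
    rw [Matrix.trace]
    refine Finset.sum_congr rfl fun i _ => ?_
    have hM : (Vᵀ * tslice E k * V) i i = g i k := by
      calc (Vᵀ * tslice E k * V) i i
          = ∑ b, ∑ a, V a i * E a b k * V b i := by
            simp [Matrix.mul_apply, Finset.sum_mul, Matrix.transpose_apply, tslice]
        _ = ∑ a, ∑ b, E a b k * V a i * V b i := by
            rw [Finset.sum_comm]
            exact Finset.sum_congr rfl fun a _ => Finset.sum_congr rfl fun b _ => by ring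
    rw [Matrix.diag_apply, Matrix.mul_apply]
    rw [Finset.sum_eq_single i (fun j _ hj => by rw [hD hj.symm, zero_mul])
      (fun h => absurd (Finset.mem_univ i) h)]
    rw [hM]
  -- columns of V are unit vectors
  have hcol : ∀ i, enorm2 (fun a => V a i) = 1 := by
    intro i
    have h1 : (Vᵀ * V) i i = 1 := by rw [hV]; simp [Matrix.one_apply]
    rw [Matrix.mul_apply] at h1
    unfold enorm2
    have h2 : ∑ a, (V a i) ^ 2 = 1 := by
      simpa [Matrix.transpose_apply, sq] using h1
    rw [h2, Real.sqrt_one]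
  have hgle : ∀ i, enorm2 (g i) ≤ tOpNorm E := fun i =>
    slice_norm_le E (fun a => V a i) (fun b => V b i) (hcol i) (hcol i)
  -- Cauchy–Schwarz on the diagonal entries
  have habs : ∑ i, |c i| ≤ Real.sqrt r * frobNorm D := by
    have hnn : 0 ≤ ∑ i, |c i| := Finset.sum_nonneg fun i _ => abs_nonneg _
    have hb : 0 ≤ frobNorm D := Real.sqrt_nonneg _
    have hrb : 0 ≤ Real.sqrt r * frobNorm D := mul_nonneg (Real.sqrt_nonneg _) hb
    have h1 : (∑ i, |c i|) ^ 2 ≤ (r : ℝ) * ∑ i, |c i| ^ 2 := by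
      simpa using sq_sum_le_card_mul_sum_sq (s := (Finset.univ : Finset (Fin r)))
        (f := fun i => |c i|)
    have h2 : ∑ i, |c i| ^ 2 ≤ frobNorm D ^ 2 := by
      rw [frobNorm, Real.sq_sqrt (by positivity)]
      refine Finset.sum_le_sum fun i _ => ?_
      rw [sq_abs]
      exact Finset.single_le_sum (fun j _ => sq_nonneg (D i j)) (Finset.mem_univ i)
    have hsq : (∑ i, |c i|) ^ 2 ≤ (Real.sqrt r * frobNorm D) ^ 2 := by
      rw [mul_pow, Real.sq_sqrt (Nat.cast_nonneg r)]
      calc (∑ i, |c i|) ^ 2 ≤ (r : ℝ) * ∑ i, |c i| ^ 2 := h1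
        _ ≤ (r : ℝ) * frobNorm D ^ 2 :=
          mul_le_mul_of_nonneg_left h2 (Nat.cast_nonneg r)
    exact le_of_pow_le_pow_left₀ two_ne_zero hrb hsq
  calc enorm2 (traceProdD E V D)
      = enorm2 (fun k => ∑ i, c i * g i k) := by rw [hexp]
    _ ≤ ∑ i, |c i| * enorm2 (g i) := enorm2_weighted_sum_le c g
    _ ≤ ∑ i, |c i| * tOpNorm E := Finset.sum_le_sum fun i _ =>
        mul_le_mul_of_nonneg_left (hgle i) (abs_nonneg _)
    _ = (∑ i, |c i|) * tOpNorm E := by rw [Finset.sum_mul]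
    _ ≤ Real.sqrt r * frobNorm D * tOpNorm E :=
        mul_le_mul_of_nonneg_right habs (tOpNorm_nonneg E)

end
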